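/- A finite set M of positive integers is an admissible mesa set (i.e., M = Mesa(w) for some Stirling permutation w) if and only if for every x ∈ M, |M ∩ [1,x]| ≤ (2x−1)/3. -/

import Mathlib

/-- `w` (read on positions `1,…,2n`) is a Stirling permutation of order `n`:
each value `1,…,n` appears exactly twice, all letters lie in `[1,n]`, and every
value between the two copies of a value exceeds it. -/
def IsStirling (n : ℕ) (w : ℕ → ℕ) : Prop :=
  (∀ k, 1 ≤ k → k ≤ n → ((Finset.Icc 1 (2*n)).filter (fun i => w i = k)).card = 2) ∧
  (∀ i, 1 ≤ i → i ≤ 2*n → 1 ≤ w i ∧ w i ≤ n) ∧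
  (∀ i j l, 1 ≤ i → i < j → j < l → l ≤ 2*n → w i = w l → w i < w j)

/-- The set of mesas of `w`: values `m` with `w(i-1) < w(i) = w(i+1) = m > w(i+2)`
for some `2 ≤ i ≤ 2n-2`. -/
def MesaSet (n : ℕ) (w : ℕ → ℕ) : Set ℕ :=
  {m | ∃ i, 2 ≤ i ∧ i + 2 ≤ 2*n ∧ w (i-1) < w i ∧ w i = w (i+1) ∧ w (i+2) < w i ∧ w i = m}

/-- The collection of admissible mesa sets of order `n`. -/
def AMS (n : ℕ) : Set (Set ℕ) := {M | ∃ w, IsStirling n w ∧ MesaSet n w = M}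

namespace MesaAux



def Pat (L : List ℕ) (j : ℕ) : Prop :=
  j + 4 ≤ L.length ∧ L.getD j 0 < L.getD (j+1) 0 ∧ L.getD (j+1) 0 = L.getD (j+2) 0 ∧
    L.getD (j+3) 0 < L.getD (j+1) 0

def mesaPat (L : List ℕ) : Set ℕ := {v | ∃ j, Pat L j ∧ L.getD (j+1) 0 = v}

lemma mesaSet_eq_mesaPat (n : ℕ) (L : List ℕ) (hL : L.length = 2*n) :
    MesaSet n (fun i => L.getD (i-1) 0) = mesaPat L := by
  ext v
  constructor
  · rintro ⟨i, hi2, hien, h1, h2, h3, h4⟩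
    obtain ⟨j, rfl⟩ : ∃ j, i = j + 2 := ⟨i - 2, by omega⟩
    exact ⟨j, ⟨by omega, h1, h2, h3⟩, h4⟩
  · rintro ⟨j, ⟨hlen, h1, h2, h3⟩, h4⟩
    exact ⟨j + 2, by omega, by omega, h1, h2, h3, h4⟩

inductive U where
  | four (a m : ℕ)
  | two (a : ℕ) (b : Bool)

def word : List U → List ℕ
  | [] => []
  | .four a m :: us => a :: m :: m :: a :: word us
  | .two a _ :: us => a :: a :: word us

def vals : List U → List ℕ
  | [] => []
  | .four a m :: us => a :: m :: vals us
  | .two a _ :: us => a :: vals us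

def headW : List U → ℕ
  | [] => 0
  | .four a _ :: _ => a
  | .two a _ :: _ => a

def Hyp : ℕ → List U → Prop
  | _, [] => True
  | _, .four a m :: us => a < m ∧ Hyp a us
  | c, .two a true :: us => (us ≠ [] ∧ c < a ∧ headW us < a) ∧ Hyp a us
  | c, .two a false :: us => (us = [] ∨ a < c ∨ a < headW us) ∧ Hyp a us

def Mset : List U → List ℕ
  | [] => []
  | .four _ m :: us => m :: Mset us
  | .two a true :: us => a :: Mset us
  | .two _ false :: us => Mset us

lemma word_eq_nil (us : List U) : word us = [] ↔ us = [] := by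
  cases us with
  | nil => simp [word]
  | cons u us => cases u <;> simp [word]

lemma two_le_length_word {us : List U} (h : us ≠ []) : 2 ≤ (word us).length := by
  cases us with
  | nil => simp at h
  | cons u us => cases u <;> simp [word]

lemma mem_word {us : List U} {x : ℕ} (h : x ∈ word us) : x ∈ vals us := by
  induction us with
  | nil => simp [word] at h
  | cons u us ih => cases u with
    | four a m =>
      simp only [word, List.mem_cons] at h
      simp only [vals, List.mem_cons]
      rcases h with h|h|h|h|h <;> tauto
    | two a b =>
      simp only [word, List.mem_cons] at h
      simp only [vals, List.mem_cons]
      rcases h with h|h|h <;> tauto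

lemma getD_mem_word {us : List U} {i : ℕ} (h : i < (word us).length) :
    (word us).getD i 0 ∈ vals us := by
  apply mem_word
  rw [List.getD_eq_getElem _ _ h]
  exact List.getElem_mem _

lemma headW_word (us : List U) (h : us ≠ []) : (word us).getD 0 0 = headW us := by
  match us with
  | .four a m :: us => rfl
  | .two a b :: us => rfl

lemma headW_mem_vals (us : List U) (h : us ≠ []) : headW us ∈ vals us := by
  match us with
  | .four a m :: us => simp [headW, vals]
  | .two a b :: us => simp [headW, vals]

lemma length_word (us : List U) : (word us).length = 2 * (vals us).length := by
  induction us with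
  | nil => simp [word, vals]
  | cons u us ih => cases u with
    | four a m => simp [word, vals, ih]; ring
    | two a b => simp [word, vals, ih]; ring

lemma mesa_main : ∀ (us : List U) (c : ℕ), (c :: vals us).Nodup → Hyp c us →
    mesaPat (c :: word us) = {v | v ∈ Mset us} := by
  intro us
  induction us with
  | nil =>
    intro c _ _
    ext v
    simp only [mesaPat, word, Mset, Set.mem_setOf_eq, List.not_mem_nil, iff_false]
    rintro ⟨j, ⟨hlen, _⟩, _⟩
    simp at hlen
  | cons u us ih =>
    intro c hnd hyp
    cases u with
    | four a m =>
      obtain ⟨ham, hyp'⟩ := hyp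
      have hnd2 : (a :: vals us).Nodup := by
        simp only [vals, List.nodup_cons, List.mem_cons] at hnd ⊢
        tauto
      have hanv : a ∉ vals us := by
        simp only [vals, List.nodup_cons, List.mem_cons] at hnd; tauto
      have IH := ih a hnd2 hyp'
      have hLW : ∀ t, (c :: word (U.four a m :: us)).getD (t+4) 0
          = (a :: word us).getD t 0 := fun t => rfl
      have hlen5 : (c :: word (U.four a m :: us)).length = 5 + (word us).length := by
        simp [word]; omega
      ext v
      simp only [mesaPat, Set.mem_setOf_eq, Mset, List.mem_cons]
      constructor
      · rintro ⟨j, ⟨hlen, h1, h2, h3⟩, h4⟩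
        match j with
        | 0 => exact absurd h2 (by simpa [word, List.getD] using Nat.ne_of_lt ham)
        | 1 =>
          left; rw [← h4]; rfl
        | 2 => exact absurd h2.symm (by simpa [word, List.getD] using Nat.ne_of_lt ham)
        | 3 =>
          exfalso
          rw [hlen5] at hlen
          have hne : us ≠ [] := by
            intro h; subst h; simp [word] at hlen
          have e1 : (c :: word (U.four a m :: us)).getD (3+1) 0 = a := rfl
          have e2 : (c :: word (U.four a m :: us)).getD (3+2) 0 = (word us).getD 0 0 := rfl
          rw [e1, e2, headW_word us hne] at h2
          exact hanv (h2 ▸ headW_mem_vals us hne)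
        | (j+4) =>
          right
          have h' : v ∈ mesaPat (a :: word us) := by
            refine ⟨j, ⟨?_, ?_, ?_, ?_⟩, ?_⟩
            · rw [hlen5] at hlen; simp; omega
            · rw [← hLW j, ← hLW (j+1)]; exact h1
            · rw [← hLW (j+1), ← hLW (j+2)]; exact h2
            · rw [← hLW (j+3), ← hLW (j+1)]; exact h3
            · rw [← hLW (j+1)]; exact h4
          rw [IH] at h'
          exact h'
      · rintro (rfl | hv)
        · refine ⟨1, ⟨by rw [hlen5]; omega, ham, rfl, ham⟩, rfl⟩
        · have h' : v ∈ mesaPat (a :: word us) := by rw [IH]; exact hv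
          obtain ⟨j, ⟨hlen, h1, h2, h3⟩, h4⟩ := h'
          refine ⟨j+4, ⟨by rw [hlen5]; simp at hlen; omega, ?_, ?_, ?_⟩, ?_⟩
          · rw [hLW j, hLW (j+1)]; exact h1
          · rw [hLW (j+1), hLW (j+2)]; exact h2
          · rw [hLW (j+3), hLW (j+1)]; exact h3
          · rw [hLW (j+1)]; exact h4
    | two a b =>
      have hnd2 : (a :: vals us).Nodup := by
        simp only [vals, List.nodup_cons, List.mem_cons] at hnd ⊢
        tauto
      have hanv : a ∉ vals us := by
        simp only [vals, List.nodup_cons, List.mem_cons] at hnd; tauto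
      have hyp' : Hyp a us := by cases b <;> exact hyp.2
      have IH := ih a hnd2 hyp'
      have hLW : ∀ t, (c :: word (U.two a b :: us)).getD (t+2) 0
          = (a :: word us).getD t 0 := fun t => rfl
      have hlen3 : (c :: word (U.two a b :: us)).length = 3 + (word us).length := by
        simp [word]; omega
      have hmset : Mset (U.two a b :: us) = if b then a :: Mset us else Mset us := by
        cases b <;> rfl
      ext v
      simp only [mesaPat, Set.mem_setOf_eq, hmset]
      constructor
      · rintro ⟨j, ⟨hlen, h1, h2, h3⟩, h4⟩
        match j with
        | 0 =>
          rw [hlen3] at hlen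
          have hne : us ≠ [] := by
            intro h; subst h; simp [word] at hlen
          have e1 : (c :: word (U.two a b :: us)).getD 0 0 = c := rfl
          have e2 : (c :: word (U.two a b :: us)).getD (0+1) 0 = a := rfl
          have e3 : (c :: word (U.two a b :: us)).getD (0+3) 0 = (word us).getD 0 0 := rfl
          rw [e1, e2] at h1
          rw [e3, e2, headW_word us hne] at h3
          cases b with
          | false =>
            exfalso
            rcases hyp.1 with h | h | h
            · exact hne h
            · omega
            · omega
          | true =>
            simp only [if_true, List.mem_cons]
            left; rw [← h4]; rfl
        | 1 =>
          exfalso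
          rw [hlen3] at hlen
          have hne : us ≠ [] := by
            intro h; subst h; simp [word] at hlen
          have e2 : (c :: word (U.two a b :: us)).getD (1+1) 0 = a := rfl
          have e3 : (c :: word (U.two a b :: us)).getD (1+2) 0 = (word us).getD 0 0 := rfl
          rw [e2, e3, headW_word us hne] at h2
          exact hanv (h2 ▸ headW_mem_vals us hne)
        | (j+2) =>
          have h' : v ∈ mesaPat (a :: word us) := by
            refine ⟨j, ⟨?_, ?_, ?_, ?_⟩, ?_⟩
            · rw [hlen3] at hlen; simp; omega
            · rw [← hLW j, ← hLW (j+1)]; exact h1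
            · rw [← hLW (j+1), ← hLW (j+2)]; exact h2
            · rw [← hLW (j+3), ← hLW (j+1)]; exact h3
            · rw [← hLW (j+1)]; exact h4
          rw [IH] at h'
          cases b with
          | false => exact h'
          | true => simp only [if_true, List.mem_cons]; right; exact h'
      · intro hv
        have hv' : (b = true ∧ v = a) ∨ v ∈ Mset us := by
          cases b <;> simp at hv <;> tauto
        rcases hv' with ⟨rfl, hva⟩ | hv
        · obtain ⟨⟨hne, hca', hha⟩, _⟩ := hyp
          refine ⟨0, ⟨?_, ?_, ?_, ?_⟩, ?_⟩
          · rw [hlen3]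
            have := two_le_length_word hne
            omega
          · exact hca'
          · rfl
          · show (c :: word (U.two a true :: us)).getD 3 0 < a
            have e3 : (c :: word (U.two a true :: us)).getD 3 0 = (word us).getD 0 0 := rfl
            rw [e3, headW_word us hne]; exact hha
          · rw [hva]; rfl
        · have h' : v ∈ mesaPat (a :: word us) := by rw [IH]; exact hv
          obtain ⟨j, ⟨hlen, h1, h2, h3⟩, h4⟩ := h'
          refine ⟨j+2, ⟨by rw [hlen3]; simp at hlen; omega, ?_, ?_, ?_⟩, ?_⟩
          · rw [hLW j, hLW (j+1)]; exact h1
          · rw [hLW (j+1), hLW (j+2)]; exact h2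
          · rw [hLW (j+3), hLW (j+1)]; exact h3
          · rw [hLW (j+1)]; exact h4



lemma fourLt_of_hyp {c : ℕ} {us : List U} (h : Hyp c us) :
    ∀ a m, U.four a m ∈ us → a < m := by
  induction us generalizing c with
  | nil => simp
  | cons u us ih =>
    intro a m hm
    rcases List.mem_cons.mp hm with h1 | h1
    · cases u with
      | four a' m' => cases h1; exact h.1
      | two a' b => simp at h1
    · cases u with
      | four a' m' => exact ih h.2 a m h1
      | two a' b => cases b <;> exact ih h.2 a m h1

lemma count_word (us : List U) (v : ℕ) :
    (word us).count v = 2 * (vals us).count v := by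
  induction us with
  | nil => simp [word, vals]
  | cons u us ih => cases u with
    | four a m => simp [word, vals, List.count_cons, ih]; ring
    | two a b => simp [word, vals, List.count_cons, ih]; ring
lemma stir_third (us : List U) (hnd : (vals us).Nodup)
    (hfl : ∀ a m, U.four a m ∈ us → a < m) :
    ∀ i j l, i < j → j < l → l < (word us).length →
      (word us).getD i 0 = (word us).getD l 0 →
      (word us).getD i 0 < (word us).getD j 0 := by
  induction us with
  | nil => intro i j l _ _ hl; simp [word] at hl
  | cons u us ih =>
    intro i j l hij hjl hl heq
    cases u with
    | four a m =>
      have ham : a < m := hfl a m (by simp)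
      have hnd' : (vals us).Nodup := by
        simp only [vals, List.nodup_cons] at hnd; tauto
      have hanv : a ∉ vals us := by
        simp only [vals, List.nodup_cons, List.mem_cons] at hnd; tauto
      have hmnv : m ∉ vals us := by
        simp only [vals, List.nodup_cons, List.mem_cons] at hnd; tauto
      have hlen : (word (U.four a m :: us)).length = 4 + (word us).length := by
        simp [word]; omega
      have hshift : ∀ t, (word (U.four a m :: us)).getD (t+4) 0 = (word us).getD t 0 :=
        fun t => rfl
      have e0 : (word (U.four a m :: us)).getD 0 0 = a := rfl
      have e1 : (word (U.four a m :: us)).getD 1 0 = m := rfl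
      have e2 : (word (U.four a m :: us)).getD 2 0 = m := rfl
      have e3 : (word (U.four a m :: us)).getD 3 0 = a := rfl
      by_cases hl3 : l ≤ 3
      · have hi : i ≤ 1 := by omega
        have hj : j ≤ 2 := by omega
        interval_cases i <;> interval_cases j <;> interval_cases l <;>
          simp only [e0, e1, e2, e3] at heq ⊢ <;> omega
      · -- l ≥ 4
        have hi4 : 4 ≤ i := by
          by_contra hi
          push_neg at hi
          have hmem : (word (U.four a m :: us)).getD l 0 ∈ vals us := by
            obtain ⟨l', rfl⟩ : ∃ l', l = l' + 4 := ⟨l - 4, by omega⟩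
            rw [hshift]
            exact getD_mem_word (by rw [hlen] at hl; omega)
          have : (word (U.four a m :: us)).getD i 0 ∈ vals us := heq ▸ hmem
          interval_cases i <;>
            simp only [e0, e1, e2, e3] at this <;> [exact hanv this; exact hmnv this;
              exact hmnv this; exact hanv this]
        obtain ⟨i', rfl⟩ : ∃ i', i = i' + 4 := ⟨i - 4, by omega⟩
        obtain ⟨j', rfl⟩ : ∃ j', j = j' + 4 := ⟨j - 4, by omega⟩
        obtain ⟨l', rfl⟩ : ∃ l', l = l' + 4 := ⟨l - 4, by omega⟩
        rw [hshift] at heq ⊢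
        rw [hshift] at heq
        exact ih hnd' (fun a' m' h => hfl a' m' (by simp [h])) i' j' l'
          (by omega) (by omega) (by rw [hlen] at hl; omega) heq
    | two a b =>
      have hnd' : (vals us).Nodup := by
        simp only [vals, List.nodup_cons] at hnd; tauto
      have hanv : a ∉ vals us := by
        simp only [vals, List.nodup_cons, List.mem_cons] at hnd; tauto
      have hlen : (word (U.two a b :: us)).length = 2 + (word us).length := by
        simp [word]; omega
      have hshift : ∀ t, (word (U.two a b :: us)).getD (t+2) 0 = (word us).getD t 0 :=
        fun t => rfl
      have e0 : (word (U.two a b :: us)).getD 0 0 = a := rfl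
      have e1 : (word (U.two a b :: us)).getD 1 0 = a := rfl
      have hi2 : 2 ≤ i := by
        by_contra hi
        push_neg at hi
        have hl2 : 2 ≤ l := by omega
        have hmem : (word (U.two a b :: us)).getD l 0 ∈ vals us := by
          obtain ⟨l', rfl⟩ : ∃ l', l = l' + 2 := ⟨l - 2, by omega⟩
          rw [hshift]
          exact getD_mem_word (by rw [hlen] at hl; omega)
        have : (word (U.two a b :: us)).getD i 0 ∈ vals us := heq ▸ hmem
        interval_cases i <;> simp only [e0, e1] at this <;> exact hanv this
      obtain ⟨i', rfl⟩ : ∃ i', i = i' + 2 := ⟨i - 2, by omega⟩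
      obtain ⟨j', rfl⟩ : ∃ j', j = j' + 2 := ⟨j - 2, by omega⟩
      obtain ⟨l', rfl⟩ : ∃ l', l = l' + 2 := ⟨l - 2, by omega⟩
      rw [hshift] at heq ⊢
      rw [hshift] at heq
      exact ih hnd' (fun a' m' h => hfl a' m' (by simp [h])) i' j' l'
        (by omega) (by omega) (by rw [hlen] at hl; omega) heq



lemma card_filter_eq_count (L : List ℕ) (v : ℕ) :
    ((Finset.Icc 1 L.length).filter (fun i => L.getD (i-1) 0 = v)).card = L.count v := by
  induction L using List.reverseRecOn with
  | nil => simp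
  | append_singleton l a ih =>
    have hlen : (l ++ [a]).length = l.length + 1 := by simp
    rw [hlen]
    have hins : Finset.Icc 1 (l.length + 1) = insert (l.length+1) (Finset.Icc 1 l.length) := by
      ext x; simp [Finset.mem_Icc, Finset.mem_insert]; omega
    rw [hins, Finset.filter_insert]
    have hcong : (Finset.Icc 1 l.length).filter (fun i => (l ++ [a]).getD (i-1) 0 = v)
        = (Finset.Icc 1 l.length).filter (fun i => l.getD (i-1) 0 = v) := by
      apply Finset.filter_congr
      intro x hx
      simp only [Finset.mem_Icc] at hx
      rw [List.getD_append l [a] 0 _ (by omega)]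
    have hcount : (l ++ [a]).count v = l.count v + (if a = v then 1 else 0) := by
      rw [List.count_append]
      congr 1
      simp [List.count_singleton']
    have hget : (l ++ [a]).getD (l.length + 1 - 1) 0 = a := by
      rw [List.getD_append_right l [a] 0 _ (by omega)]
      simp
    rw [hget]
    by_cases hav : a = v
    · rw [if_pos hav, Finset.card_insert_of_notMem (by simp [Finset.mem_filter, Finset.mem_Icc])]
      rw [hcong, ih, hcount, if_pos hav]
    · rw [if_neg hav, hcong, ih, hcount, if_neg hav]
      simp

lemma card_filter_finset_eq (s : Finset ℕ) (p : ℕ → Prop) [DecidablePred p] :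
    (s.filter p).card = (s.toList.filter (fun x => decide (p x))).length := by
  rw [Finset.card, Finset.filter_val, ← Finset.coe_toList s, Multiset.filter_coe]
  simp

lemma card_filter_sort_eq (s : Finset ℕ) (p : ℕ → Prop) [DecidablePred p] :
    (s.filter p).card = ((s.sort (· ≤ ·)).filter (fun x => decide (p x))).length := by
  rw [card_filter_finset_eq]
  exact (((Finset.sort_perm_toList s (· ≤ ·)).filter _).length_eq).symm

section SortedLemmas
variable {l : List ℕ}

lemma getD_mem {l : List ℕ} {i : ℕ} (hi : i < l.length) : l.getD i 0 ∈ l := by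
  rw [List.getD_eq_getElem _ _ hi]; exact List.getElem_mem _

lemma sorted_filter_lt (hs : l.Pairwise (· < ·)) {i : ℕ} (hi : i < l.length) :
    (l.filter (fun y => decide (y < l.getD i 0))).length = i := by
  induction l generalizing i with
  | nil => simp at hi
  | cons a l ih =>
    rw [List.pairwise_cons] at hs
    match i with
    | 0 =>
      simp only [List.getD_cons_zero]
      have h2 : l.filter (fun y => decide (y < a)) = [] := by
        apply List.filter_eq_nil_iff.mpr
        intro b hb
        simp only [decide_eq_true_eq]
        have := hs.1 b hb; omega
      simp [List.filter_cons, h2]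
    | (i+1) =>
      simp only [List.getD_cons_succ]
      have hi' : i < l.length := by simpa using hi
      have ha : a < l.getD i 0 := hs.1 _ (getD_mem hi')
      have h2 : (a :: l).filter (fun y => decide (y < l.getD i 0))
          = a :: l.filter (fun y => decide (y < l.getD i 0)) := by
        rw [List.filter_cons, if_pos (by simpa using ha)]
      rw [h2, List.length_cons, ih hs.2 hi']

lemma sorted_filter_le (hs : l.Pairwise (· < ·)) {i : ℕ} (hi : i < l.length) :
    (l.filter (fun y => decide (y ≤ l.getD i 0))).length = i + 1 := by
  induction l generalizing i with
  | nil => simp at hi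
  | cons a l ih =>
    rw [List.pairwise_cons] at hs
    match i with
    | 0 =>
      simp only [List.getD_cons_zero]
      have h2 : l.filter (fun y => decide (y ≤ a)) = [] := by
        apply List.filter_eq_nil_iff.mpr
        intro b hb
        simp only [decide_eq_true_eq]
        have := hs.1 b hb; omega
      simp [List.filter_cons, h2]
    | (i+1) =>
      simp only [List.getD_cons_succ]
      have hi' : i < l.length := by simpa using hi
      have ha : a < l.getD i 0 := hs.1 _ (getD_mem hi')
      have h2 : (a :: l).filter (fun y => decide (y ≤ l.getD i 0))
          = a :: l.filter (fun y => decide (y ≤ l.getD i 0)) := by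
        rw [List.filter_cons, if_pos (by simpa using le_of_lt ha)]
      rw [h2, List.length_cons, ih hs.2 hi']

lemma sorted_getD_lt_of_filter (hs : l.Pairwise (· < ·)) {i x : ℕ}
    (h : i + 1 ≤ (l.filter (fun y => decide (y < x))).length) : l.getD i 0 < x := by
  induction l generalizing i with
  | nil => simp at h
  | cons a l ih =>
    rw [List.pairwise_cons] at hs
    rw [List.filter_cons] at h
    by_cases hax : a < x
    · rw [if_pos (by simpa using hax)] at h
      match i with
      | 0 => simpa using hax
      | (i+1) =>
        simp only [List.getD_cons_succ]
        exact ih hs.2 (by simpa using h)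
    · rw [if_neg (by simpa using hax)] at h
      have h2 : l.filter (fun y => decide (y < x)) = [] := by
        apply List.filter_eq_nil_iff.mpr
        intro b hb
        simp only [decide_eq_true_eq]
        have := hs.1 b hb; omega
      rw [h2] at h
      simp at h

lemma sorted_getD_mono (hs : l.Pairwise (· < ·)) {i j : ℕ} (hij : i ≤ j) (hj : j < l.length) :
    l.getD i 0 ≤ l.getD j 0 := by
  induction l generalizing i j with
  | nil => simp at hj
  | cons a l ih =>
    rw [List.pairwise_cons] at hs
    match i, j with
    | 0, 0 => exact le_refl _
    | 0, (j+1) =>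
      simp only [List.getD_cons_zero, List.getD_cons_succ]
      exact le_of_lt (hs.1 _ (getD_mem (by simpa using hj)))
    | (i+1), (j+1) =>
      simp only [List.getD_cons_succ]
      exact ih hs.2 (by omega) (by simpa using hj)

end SortedLemmas

def build : List ℕ → List ℕ → List U
  | [], gs => gs.map (fun g => U.two g false)
  | _ :: _, [] => []
  | [m1], g :: gs => U.four g m1 :: gs.map (fun g => U.two g false)
  | m1 :: m2 :: mr, g :: gr => U.four g m1 :: U.two m2 true :: build mr gr

lemma headW_map_two (gs : List ℕ) (g : ℕ) :
    headW ((g :: gs).map (fun g => U.two g false)) = g := rfl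

lemma headW_build (ms : List ℕ) (g : ℕ) (gr : List ℕ) :
    headW (build ms (g :: gr)) = g := by
  match ms with
  | [] => rfl
  | [m] => rfl
  | m1 :: m2 :: mr => rfl

lemma build_ne_nil (ms gs : List ℕ) (h : gs ≠ []) : build ms gs ≠ [] := by
  match ms, gs with
  | [], g :: gs => simp [build]
  | [m], g :: gs => simp [build]
  | m1 :: m2 :: mr, g :: gs => simp [build]

lemma mset_map_two (gs : List ℕ) : Mset (gs.map (fun g => U.two g false)) = [] := by
  induction gs with
  | nil => rfl
  | cons g gs ih => simpa [Mset]

lemma mset_build (ms gs : List ℕ) (h : ms.length ≤ 2 * gs.length) :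
    Mset (build ms gs) = ms := by
  match ms, gs with
  | [], gs => exact mset_map_two gs
  | [m], g :: gs => simp [build, Mset, mset_map_two]
  | m1 :: m2 :: mr, g :: gr =>
    simp only [build, Mset]
    rw [mset_build mr gr (by simp at h ⊢; omega)]
  | m :: mr, [] => simp at h

lemma vals_map_two (gs : List ℕ) : vals (gs.map (fun g => U.two g false)) = gs := by
  induction gs with
  | nil => rfl
  | cons g gs ih => simpa [vals]

lemma count_vals_build (ms gs : List ℕ) (h : ms.length ≤ 2 * gs.length) (v : ℕ) :
    (vals (build ms gs)).count v = (ms ++ gs).count v := by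
  match ms, gs with
  | [], gs => simp [build, vals_map_two]
  | [m], g :: gs =>
    simp [build, vals, vals_map_two, List.count_cons, List.count_append]
    omega
  | m1 :: m2 :: mr, g :: gr =>
    simp only [build, vals]
    rw [List.count_cons, List.count_cons, List.count_cons,
      count_vals_build mr gr (by simp at h ⊢; omega)]
    simp [List.count_append, List.count_cons]
    omega
  | m :: mr, [] => simp at h

lemma perm_vals_build (ms gs : List ℕ) (h : ms.length ≤ 2 * gs.length) :
    (vals (build ms gs)).Perm (ms ++ gs) :=
  List.perm_iff_count.mpr (fun v => count_vals_build ms gs h v)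

lemma hyp_map_two (gs : List ℕ) (c : ℕ) (hs : gs.Pairwise (· < ·)) :
    Hyp c (gs.map (fun g => U.two g false)) := by
  induction gs generalizing c with
  | nil => trivial
  | cons g gs ih =>
    rw [List.pairwise_cons] at hs
    refine ⟨?_, ih g hs.2⟩
    match gs with
    | [] => left; rfl
    | g' :: gs' =>
      right; right
      rw [headW_map_two]
      exact hs.1 g' (by simp)

lemma hyp_build (ms gs : List ℕ) (c : ℕ)
    (hms : ms.Pairwise (· < ·)) (hgs : gs.Pairwise (· < ·))
    (hlen : ms ≠ [] → ms.length / 2 + 1 ≤ gs.length)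
    (k1 : ∀ i, 2*i < ms.length → gs.getD i 0 < ms.getD (2*i) 0)
    (k2 : ∀ i, 2*i+1 < ms.length → gs.getD (i+1) 0 < ms.getD (2*i+1) 0) :
    Hyp c (build ms gs) := by
  match ms, gs with
  | [], gs => exact hyp_map_two gs c hgs
  | m :: mr, [] => exact absurd (hlen (by simp)) (by simp)
  | [m], g :: gr =>
    refine ⟨?_, hyp_map_two gr g (List.pairwise_cons.mp hgs).2⟩
    exact k1 0 (by simp)
  | m1 :: m2 :: mr, g :: gr =>
    have hgr : gr ≠ [] := by
      have := hlen (by simp)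
      simp only [List.length_cons] at this
      intro hh
      rw [hh] at this
      simp at this
    obtain ⟨g', gr', rfl⟩ : ∃ g' gr', gr = g' :: gr' := by
      match gr with
      | [] => exact absurd rfl hgr
      | g' :: gr' => exact ⟨g', gr', rfl⟩
    refine ⟨k1 0 (by simp), ⟨build_ne_nil mr _ (by simp), ?_, ?_⟩, ?_⟩
    · -- g < m2
      have h1 : g < m1 := by simpa using k1 0 (by simp)
      have h12 : m1 < m2 := (List.pairwise_cons.mp hms).1 m2 (by simp)
      omega
    · -- headW (build mr (g'::gr')) < m2
      rw [headW_build]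
      simpa using k2 0 (by simp)
    · -- Hyp m2 (build mr (g'::gr'))
      apply hyp_build mr (g' :: gr') m2
      · exact (List.pairwise_cons.mp (List.pairwise_cons.mp hms).2).2
      · exact (List.pairwise_cons.mp hgs).2
      · intro hmr
        have := hlen (by simp)
        simp only [List.length_cons] at this ⊢
        have hmr1 : 1 ≤ mr.length := by
          match mr with
          | [] => simp at hmr
          | _ :: _ => simp
        omega
      · intro i hi
        have := k1 (i+1) (by simp at hi ⊢; omega)
        simpa [Nat.mul_add] using this
      · intro i hi
        have := k2 (i+1) (by simp at hi ⊢; omega)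
        simpa [Nat.mul_add] using this




lemma cons_mesaPat (c : ℕ) (L : List ℕ) (h : L.getD 0 0 ≠ L.getD 1 0) :
    mesaPat (c :: L) = mesaPat L := by
  have hsh : ∀ t, (c :: L).getD (t+1) 0 = L.getD t 0 := fun t => rfl
  ext v
  constructor
  · rintro ⟨j, ⟨hlen, h1, h2, h3⟩, h4⟩
    match j with
    | 0 => exact absurd h2 h
    | (j+1) =>
      refine ⟨j, ⟨by simpa using hlen, ?_, ?_, ?_⟩, ?_⟩
      · rw [← hsh j, ← hsh (j+1)]; exact h1
      · rw [← hsh (j+1), ← hsh (j+2)]; exact h2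
      · rw [← hsh (j+3), ← hsh (j+1)]; exact h3
      · rw [← hsh (j+1)]; exact h4
  · rintro ⟨j, ⟨hlen, h1, h2, h3⟩, h4⟩
    refine ⟨j+1, ⟨by simp; omega, ?_, ?_, ?_⟩, ?_⟩
    · rw [hsh j, hsh (j+1)]; exact h1
    · rw [hsh (j+1), hsh (j+2)]; exact h2
    · rw [hsh (j+3), hsh (j+1)]; exact h3
    · rw [hsh (j+1)]; exact h4

/-- The backward direction: constructing a Stirling permutation with mesa set `M`. -/
lemma backward (M : Set ℕ) (hfin : M.Finite) (hpos : ∀ x ∈ M, 1 ≤ x) (hMne : M.Nonempty)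
    (hcond : ∀ x ∈ M, 3 * (M ∩ Set.Icc 1 x).ncard ≤ 2*x - 1) :
    ∃ n w, IsStirling n w ∧ MesaSet n w = M := by
  classical
  set F : Finset ℕ := hfin.toFinset with hFdef
  have hFne : F.Nonempty := by
    obtain ⟨x, hx⟩ := hMne
    exact ⟨x, by rw [hFdef, Set.Finite.mem_toFinset]; exact hx⟩
  have hmemF : ∀ v, v ∈ F ↔ v ∈ M := fun v => Set.Finite.mem_toFinset hfin
  set n := F.max' hFne with hndef
  have hFsub : F ⊆ Finset.Icc 1 n := by
    intro y hy
    rw [Finset.mem_Icc]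
    exact ⟨hpos y ((hmemF y).mp hy), F.le_max' y hy⟩
  set G : Finset ℕ := Finset.Icc 1 n \ F with hGdef
  set ms : List ℕ := F.sort (· ≤ ·) with hmsdef
  set gs : List ℕ := G.sort (· ≤ ·) with hgsdef
  have hms : ms.Pairwise (· < ·) := (Finset.sortedLT_sort F).pairwise
  have hgs : gs.Pairwise (· < ·) := (Finset.sortedLT_sort G).pairwise
  have hmslen : ms.length = F.card := Finset.length_sort _
  have hgslen : gs.length = G.card := Finset.length_sort _
  set k := F.card with hkdef
  have hkn : k ≤ n := by
    have := Finset.card_le_card hFsub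
    simpa [Nat.card_Icc] using this
  have hGcard : G.card = n - k := by
    rw [hGdef, Finset.card_sdiff_of_subset hFsub, Nat.card_Icc]
    omega
  have hmemms : ∀ v, v ∈ ms ↔ v ∈ F := fun v => Finset.mem_sort _
  have hmemgs : ∀ v, v ∈ gs ↔ v ∈ G := fun v => Finset.mem_sort _
  -- the key numeric condition on sorted mesa values
  have key : ∀ x ∈ F, 3 * (F.filter (fun y => y ≤ x)).card ≤ 2*x - 1 := by
    intro x hx
    have h1 : M ∩ Set.Icc 1 x = ↑(F.filter (fun y => y ≤ x)) := by
      ext y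
      simp only [Set.mem_inter_iff, Set.mem_Icc, Finset.coe_filter, Set.mem_setOf_eq,
        hmemF]
      constructor
      · rintro ⟨h, _, h2⟩; exact ⟨h, h2⟩
      · rintro ⟨h, h2⟩; exact ⟨h, hpos y h, h2⟩
    have := hcond x ((hmemF x).mp hx)
    rw [h1, Set.ncard_coe_finset] at this
    exact this
  have key' : ∀ i, i < k → 3 * (i+1) ≤ 2 * (ms.getD i 0) - 1 := by
    intro i hi
    have hik : i < ms.length := by rw [hmslen]; omega
    have hx : ms.getD i 0 ∈ F := (hmemms _).mp (getD_mem hik)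
    have h1 := key _ hx
    have h2 : (F.filter (fun y => y ≤ ms.getD i 0)).card = i + 1 := by
      rw [hmsdef, card_filter_sort_eq]
      exact sorted_filter_le hms (hmsdef ▸ hik)
    omega
  have cnt_lt : ∀ i, i < k → (F.filter (fun y => y < ms.getD i 0)).card = i := by
    intro i hi
    have hik : i < ms.length := by rw [hmslen]; omega
    rw [hmsdef, card_filter_sort_eq]
    exact sorted_filter_lt hms (hmsdef ▸ hik)
  -- count of non-mesa values below a bound
  have hGcnt : ∀ x, 1 ≤ x → x ≤ n →
      (G.filter (fun y => y < x)).card + (F.filter (fun y => y < x)).card = x - 1 := by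
    intro x hx1 hxn
    have hpart : (Finset.Icc 1 n).filter (fun y => y < x)
        = (F.filter (fun y => y < x)) ∪ (G.filter (fun y => y < x)) := by
      ext y
      simp only [Finset.mem_filter, Finset.mem_union, hGdef, Finset.mem_sdiff]
      constructor
      · rintro ⟨hy, hyx⟩
        by_cases hyF : y ∈ F
        · exact Or.inl ⟨hyF, hyx⟩
        · exact Or.inr ⟨⟨hy, hyF⟩, hyx⟩
      · rintro (⟨hyF, hyx⟩ | ⟨⟨hy, _⟩, hyx⟩)
        · exact ⟨hFsub hyF, hyx⟩
        · exact ⟨hy, hyx⟩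
    have hIccf : (Finset.Icc 1 n).filter (fun y => y < x) = Finset.Icc 1 (x-1) := by
      ext y
      simp only [Finset.mem_filter, Finset.mem_Icc]
      omega
    have hdisj : Disjoint (F.filter (fun y => y < x)) (G.filter (fun y => y < x)) := by
      rw [Finset.disjoint_left]
      intro y hy hy'
      rw [Finset.mem_filter] at hy hy'
      rw [hGdef, Finset.mem_sdiff] at hy'
      exact hy'.1.2 hy.1
    have := Finset.card_union_of_disjoint hdisj
    rw [← hpart, hIccf, Nat.card_Icc] at this
    omega
  have hmsmax : ms.getD (k-1) 0 = n := by
    have hnF : n ∈ F := F.max'_mem hFne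
    have hnms : n ∈ ms := (hmemms n).mpr hnF
    obtain ⟨t, ht, hteq⟩ := List.mem_iff_getElem.mp hnms
    have htd : ms.getD t 0 = n := by rw [List.getD_eq_getElem _ _ ht]; exact hteq
    have hk1 : k - 1 < ms.length := by
      have : 0 < k := Finset.card_pos.mpr hFne
      rw [hmslen]; omega
    have h1 : ms.getD t 0 ≤ ms.getD (k-1) 0 :=
      sorted_getD_mono hms (by omega) hk1
    have h2 : ms.getD (k-1) 0 ≤ n :=
      F.le_max' _ ((hmemms _).mp (getD_mem hk1))
    omega
  have hk1 : 1 ≤ k := Finset.card_pos.mpr hFne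
  have h3k : 3 * k ≤ 2 * n - 1 := by
    have := key' (k-1) (by omega)
    rw [hmsmax] at this
    omega
  have hn1 : 1 ≤ n := by omega
  -- main inequalities
  have hmsn : ∀ i, i < k → 1 ≤ ms.getD i 0 ∧ ms.getD i 0 ≤ n := by
    intro i hi
    have hik : i < ms.length := by rw [hmslen]; omega
    have hx : ms.getD i 0 ∈ F := (hmemms _).mp (getD_mem hik)
    exact ⟨hpos _ ((hmemF _).mp hx), F.le_max' _ hx⟩
  have k1 : ∀ i, 2*i < ms.length → gs.getD i 0 < ms.getD (2*i) 0 := by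
    intro i hi'
    have hi : 2*i < k := by rw [← hmslen]; omega
    have hx := hmsn (2*i) hi
    have h1 := cnt_lt (2*i) hi
    have h2 := key' (2*i) hi
    have h3 := hGcnt (ms.getD (2*i) 0) hx.1 hx.2
    apply sorted_getD_lt_of_filter hgs
    rw [hgsdef, ← card_filter_sort_eq]
    omega
  have k2 : ∀ i, 2*i+1 < ms.length → gs.getD (i+1) 0 < ms.getD (2*i+1) 0 := by
    intro i hi'
    have hi : 2*i+1 < k := by rw [← hmslen]; omega
    have hx := hmsn (2*i+1) hi
    have h1 := cnt_lt (2*i+1) hi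
    have h2 := key' (2*i+1) hi
    have h3 := hGcnt (ms.getD (2*i+1) 0) hx.1 hx.2
    apply sorted_getD_lt_of_filter hgs
    rw [hgsdef, ← card_filter_sort_eq]
    omega
  have hlen2 : ms ≠ [] → ms.length / 2 + 1 ≤ gs.length := by
    intro _
    rw [hmslen, hgslen, hGcard]
    omega
  -- build the units
  -- build the units
  set us := build ms gs with husdef
  have hmsne : ms ≠ [] := by
    intro h
    have := hmslen
    rw [h] at this
    simp at this
    omega
  have hbound : ms.length ≤ 2 * gs.length := by
    have := hlen2 hmsne
    omega
  have hgsne : gs ≠ [] := by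
    intro h
    have := hlen2 hmsne
    rw [h] at this
    simp at this
  have hperm := perm_vals_build ms gs hbound
  have hndms : ms.Nodup := Finset.sort_nodup _ _
  have hndgs : gs.Nodup := Finset.sort_nodup _ _
  have hndapp : (ms ++ gs).Nodup := by
    rw [List.nodup_append]
    refine ⟨hndms, hndgs, ?_⟩
    intro v hv b hv' hvb
    rw [hmemms] at hv
    rw [hmemgs, hGdef, Finset.mem_sdiff] at hv'
    exact hv'.2 (hvb ▸ hv)
  have hndvals : (vals us).Nodup := hperm.nodup_iff.mpr hndapp
  have hvals_Icc : ∀ v, v ∈ vals us ↔ v ∈ Finset.Icc 1 n := by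
    intro v
    rw [hperm.mem_iff, List.mem_append, hmemms, hmemgs, hGdef, Finset.mem_sdiff]
    constructor
    · rintro (h | h)
      · exact hFsub h
      · exact h.1
    · intro h
      by_cases hF : v ∈ F
      · exact Or.inl hF
      · exact Or.inr ⟨h, hF⟩
  have hvlen : (vals us).length = n := by
    rw [hperm.length_eq, List.length_append, hmslen, hgslen, hGcard]
    omega
  have hLlen : (word us).length = 2 * n := by
    rw [length_word, hvlen]
  have Hyp0 : Hyp 0 us := hyp_build ms gs 0 hms hgs hlen2 k1 k2
  refine ⟨n, fun i => (word us).getD (i-1) 0, ⟨?_, ?_, ?_⟩, ?_⟩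
  · -- each value appears exactly twice
    intro v h1 hn
    have hcnt : ((Finset.Icc 1 (word us).length).filter
        (fun i => (word us).getD (i-1) 0 = v)).card = (word us).count v :=
      card_filter_eq_count (word us) v
    rw [hLlen] at hcnt
    have hv : v ∈ vals us := (hvals_Icc v).mpr (Finset.mem_Icc.mpr ⟨h1, hn⟩)
    have : (word us).count v = 2 := by
      rw [count_word, List.count_eq_one_of_mem hndvals hv]
    have h2 := hcnt.trans this
    simpa using h2
  · -- values in range
    intro i h1 h2
    have hi : i - 1 < (word us).length := by omega
    have := (hvals_Icc _).mp (getD_mem_word hi)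
    rw [Finset.mem_Icc] at this
    exact this
  · -- betweenness
    intro i j l h1 hij hjl hl heq
    exact stir_third us hndvals (fourLt_of_hyp Hyp0) (i-1) (j-1) (l-1)
      (by omega) (by omega) (by omega) (by
        have : l - 1 + 1 = l := by omega
        convert heq using 2 <;> omega)
  · -- the mesa set is M
    have h0 : MesaSet n (fun i => (word us).getD (i-1) 0) = mesaPat (word us) :=
      mesaSet_eq_mesaPat n (word us) hLlen
    obtain ⟨m1, mr, hmseq⟩ : ∃ m1 mr, ms = m1 :: mr := by
      match ms, hmsne with
      | m1 :: mr, _ => exact ⟨m1, mr, rfl⟩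
    obtain ⟨g1, gr, hgseq⟩ : ∃ g1 gr, gs = g1 :: gr := by
      match gs, hgsne with
      | g1 :: gr, _ => exact ⟨g1, gr, rfl⟩
    have hg1m1 : g1 < m1 := by
      have := k1 0 (by rw [hmseq]; simp)
      rw [hmseq, hgseq] at this
      simpa using this
    have hL01 : (word us).getD 0 0 ≠ (word us).getD 1 0 := by
      rw [husdef, hmseq, hgseq]
      match mr with
      | [] =>
        show g1 ≠ m1
        omega
      | m2 :: mr' =>
        show g1 ≠ m1
        omega
    have h1 : mesaPat (word us) = mesaPat (0 :: word us) := (cons_mesaPat 0 _ hL01).symm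
    have hnd0 : ((0:ℕ) :: vals us).Nodup := by
      rw [List.nodup_cons]
      refine ⟨?_, hndvals⟩
      intro h0'
      have := (hvals_Icc 0).mp h0'
      rw [Finset.mem_Icc] at this
      omega
    have h2 : mesaPat (0 :: word us) = {v | v ∈ Mset us} := mesa_main us 0 hnd0 Hyp0
    have h3 : Mset us = ms := mset_build ms gs hbound
    rw [h0, h1, h2, h3]
    ext v
    simp only [Set.mem_setOf_eq, hmemms, hmemF]


lemma forward {n : ℕ} {w : ℕ → ℕ} (hS : IsStirling n w) {x : ℕ} (hx : x ∈ MesaSet n w) :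
    3 * ((MesaSet n w) ∩ Set.Icc 1 x).ncard ≤ 2*x - 1 := by
  classical
  obtain ⟨hcount, hrange, hbetween⟩ := hS
  have hfin' : ((MesaSet n w) ∩ Set.Icc 1 x).Finite :=
    Set.Finite.subset (Set.finite_Icc 1 x) Set.inter_subset_right
  set S := hfin'.toFinset with hSdef
  have hncard : ((MesaSet n w) ∩ Set.Icc 1 x).ncard = S.card :=
    Set.ncard_eq_toFinset_card _ hfin'
  -- basic facts about x
  have hx' := hx
  obtain ⟨i₀, hi₀2, hi₀n, _, _, _, hwi₀⟩ := hx'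
  have hx1 : 1 ≤ x := by
    have := hrange i₀ (by omega) (by omega); omega
  have hxn : x ≤ n := by
    have := hrange i₀ (by omega) (by omega); omega
  have hxS : x ∈ S := by
    rw [hSdef, Set.Finite.mem_toFinset]
    exact ⟨hx, by simp only [Set.mem_Icc]; omega⟩
  -- choose witnesses
  have hwit : ∀ m : ℕ, ∃ i, m ∈ S →
      (2 ≤ i ∧ i + 2 ≤ 2*n ∧ w (i-1) < w i ∧ w i = w (i+1) ∧ w (i+2) < w i ∧ w i = m) := by
    intro m
    by_cases hm : m ∈ S
    · have : m ∈ MesaSet n w := by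
        rw [hSdef, Set.Finite.mem_toFinset] at hm; exact hm.1
      obtain ⟨i, hi⟩ := this
      exact ⟨i, fun _ => hi⟩
    · exact ⟨0, fun h => absurd h hm⟩
  choose I hI using hwit
  have hmS : ∀ m ∈ S, 1 ≤ m ∧ m ≤ x := by
    intro m hm
    rw [hSdef, Set.Finite.mem_toFinset] at hm
    simpa [Set.mem_Icc] using hm.2
  -- separation
  have sep' : ∀ m ∈ S, ∀ m' ∈ S, m ≠ m' → I m < I m' → I m + 3 ≤ I m' := by
    intro m hm m' hm' hne hlt
    obtain ⟨h2, hn2, hfl, hpair, hfr, hv⟩ := hI m hm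
    obtain ⟨h2', hn2', hfl', hpair', hfr', hv'⟩ := hI m' hm'
    by_contra hcon
    push_neg at hcon
    have hcase : I m' = I m + 1 ∨ I m' = I m + 2 := by omega
    rcases hcase with hIm' | hIm'
    · rw [hIm'] at hv'
      rw [← hpair] at hv'
      omega
    · rw [hIm'] at hfl' hv'
      rw [show I m + 2 - 1 = I m + 1 from rfl, ← hpair] at hfl'
      omega
  have sep : ∀ m ∈ S, ∀ m' ∈ S, m ≠ m' → I m + 3 ≤ I m' ∨ I m' + 3 ≤ I m := by
    intro m hm m' hm' hne
    rcases lt_trichotomy (I m) (I m') with h | h | h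
    · exact Or.inl (sep' m hm m' hm' hne h)
    · exfalso
      obtain ⟨_, _, _, _, _, hv⟩ := hI m hm
      obtain ⟨_, _, _, _, _, hv'⟩ := hI m' hm'
      rw [h] at hv
      omega
    · exact Or.inr (sep' m' hm' m hm (Ne.symm hne) h)
  -- the triple positions
  set T := S.biUnion (fun m => ({I m, I m + 1, I m + 2} : Finset ℕ)) with hTdef
  have hTcard : T.card = 3 * S.card := by
    rw [hTdef, Finset.card_biUnion]
    · have : ∀ m, ({I m, I m + 1, I m + 2} : Finset ℕ).card = 3 := by
        intro m
        rw [Finset.card_insert_of_notMem (by simp), Finset.card_insert_of_notMem (by simp),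
          Finset.card_singleton]
      rw [Finset.sum_congr rfl (fun m _ => this m)]
      simp [Finset.sum_const]
      ring
    · intro m hm m' hm' hne
      have := sep m hm m' hm' hne
      rw [Function.onFun, Finset.disjoint_left]
      intro t ht ht'
      simp only [Finset.mem_insert, Finset.mem_singleton] at ht ht'
      omega
  -- minimal witness
  obtain ⟨m₀, hm₀S, hmin⟩ := S.exists_min_image I ⟨x, hxS⟩
  have hm₀ := hI m₀ hm₀S
  have heT : I m₀ - 1 ∉ T := by
    rw [hTdef]
    intro hcon
    rw [Finset.mem_biUnion] at hcon
    obtain ⟨m, hm, ht⟩ := hcon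
    have := hmin m hm
    simp only [Finset.mem_insert, Finset.mem_singleton] at ht
    have h2 := (hI m₀ hm₀S).1
    omega
  -- the big position set
  set P := (Finset.Icc 1 (2*n)).filter (fun p => 1 ≤ w p ∧ w p ≤ x) with hPdef
  have hTP : insert (I m₀ - 1) T ⊆ P := by
    intro t ht
    rw [Finset.mem_insert] at ht
    rw [hPdef, Finset.mem_filter, Finset.mem_Icc]
    rcases ht with rfl | ht
    · obtain ⟨h2, hn2, hfl, hpair, hfr, hv⟩ := hm₀
      have hmx := hmS m₀ hm₀S
      have hr := hrange (I m₀ - 1) (by omega) (by omega)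
      constructor
      · omega
      · constructor
        · omega
        · omega
    · rw [hTdef, Finset.mem_biUnion] at ht
      obtain ⟨m, hm, htm⟩ := ht
      obtain ⟨h2, hn2, hfl, hpair, hfr, hv⟩ := hI m hm
      have hmx := hmS m hm
      simp only [Finset.mem_insert, Finset.mem_singleton] at htm
      rcases htm with rfl | rfl | rfl
      · exact ⟨⟨by omega, by omega⟩, by omega, by omega⟩
      · exact ⟨⟨by omega, by omega⟩, by rw [← hpair]; omega, by rw [← hpair]; omega⟩
      · have hr := hrange (I m + 2) (by omega) (by omega)
        exact ⟨⟨by omega, by omega⟩, by omega, by omega⟩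
  -- card of P
  have hPcard : P.card = 2 * x := by
    have hPeq : P = (Finset.Icc 1 x).biUnion
        (fun v => (Finset.Icc 1 (2*n)).filter (fun i => w i = v)) := by
      ext p
      rw [hPdef, Finset.mem_filter, Finset.mem_biUnion]
      constructor
      · rintro ⟨hp, h1, h2⟩
        exact ⟨w p, by rw [Finset.mem_Icc]; omega, by rw [Finset.mem_filter]; exact ⟨hp, rfl⟩⟩
      · rintro ⟨v, hv, hp⟩
        rw [Finset.mem_filter] at hp
        rw [Finset.mem_Icc] at hv
        exact ⟨hp.1, by omega, by omega⟩
    rw [hPeq, Finset.card_biUnion]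
    · rw [Finset.sum_congr rfl (fun v hv => hcount v (by rw [Finset.mem_Icc] at hv; omega)
        (by rw [Finset.mem_Icc] at hv; omega))]
      simp [Finset.sum_const, Nat.card_Icc]
      ring
    · intro v hv v' hv' hne
      rw [Function.onFun, Finset.disjoint_left]
      intro t ht ht'
      rw [Finset.mem_filter] at ht ht'
      exact hne (ht.2 ▸ ht'.2 ▸ rfl)
  have hfinal : 3 * S.card + 1 ≤ 2 * x := by
    have hsub := Finset.card_le_card hTP
    rw [Finset.card_insert_of_notMem heT, hTcard, hPcard] at hsub
    omega
  omega



end MesaAux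

theorem mesa_characterization (M : Set ℕ) (hfin : M.Finite) (hpos : ∀ x ∈ M, 1 ≤ x) :
    (∃ n w, IsStirling n w ∧ MesaSet n w = M) ↔
      ∀ x ∈ M, 3 * (M ∩ Set.Icc 1 x).ncard ≤ 2*x - 1 := by

  constructor
  · rintro ⟨n, w, hst, rfl⟩
    intro x hx
    exact MesaAux.forward hst hx
  · intro hcond
    rcases M.eq_empty_or_nonempty with rfl | hMne
    · refine ⟨0, fun _ => 0, ⟨?_, ?_, ?_⟩, ?_⟩
      · intro k h1 h2; omega
      · intro i h1 h2; omega
      · intro i j l h1 h2 h3 h4; omega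
      · ext v
        simp only [MesaSet, Set.mem_setOf_eq, Set.mem_empty_iff_false, iff_false]
        rintro ⟨i, h1, h2, _⟩
        omega
    · exact MesaAux.backward M hfin hpos hMne hcond
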